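/- Let n ≥ 2 and L ≥ 0 be integers, let P ∈ ℂ[w₁,…,wₙ,v₁,…,vₙ] be bihomogeneous of bidegree (L,L), and let Ψ = X^{-L}·P, viewed as a holomorphic function on the open set U = {(w,v) ∈ ℂⁿ × ℂⁿ : X(w,v) ≠ 0}. Let Ĥ be the operator Ĥf = −X·∑_{α=1}^n ∂²f/∂w_α∂v_α. Then: (i) if ΔP = 0, then ĤΨ = L(L+n−1)·Ψ on U; and (ii) conversely, if ĤΨ = L(L+n−1)·Ψ holds on U, then ΔP = 0. (This is Theorem 1 of the paper: the ansatz wave function is an eigenfunction of the Hamiltonian with eigenvalue E(n,L,q=0) = L(L+n−1) exactly when the coefficient tensor is traceless.) -/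

import Mathlib

open MvPolynomial

noncomputable section

/-- Weight function giving the degree in the `w`-variables (indexed by `Sum.inl`). -/
def wWt (n : ℕ) : (Fin n ⊕ Fin n) → ℕ := Sum.elim (fun _ => 1) (fun _ => 0)

/-- Weight function giving the degree in the `v`-variables (indexed by `Sum.inr`). -/
def vWt (n : ℕ) : (Fin n ⊕ Fin n) → ℕ := Sum.elim (fun _ => 0) (fun _ => 1)

/-- The complex Laplacian `Δ = ∑_α ∂²/∂w_α∂v_α` on polynomials. -/
def polyLap (n : ℕ) (P : MvPolynomial (Fin n ⊕ Fin n) ℂ) : MvPolynomial (Fin n ⊕ Fin n) ℂ :=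
  ∑ α : Fin n, pderiv (Sum.inl α) (pderiv (Sum.inr α) P)

/-- `X(w,v) = ∑_α w_α v_α`. -/
def XvalC (n : ℕ) (p : (Fin n → ℂ) × (Fin n → ℂ)) : ℂ := ∑ α : Fin n, p.1 α * p.2 α

/-- Evaluation of a polynomial at the point `(w, v)`. -/
def evalWV (n : ℕ) (P : MvPolynomial (Fin n ⊕ Fin n) ℂ)
    (p : (Fin n → ℂ) × (Fin n → ℂ)) : ℂ :=
  MvPolynomial.eval (Sum.elim p.1 p.2) P

/-- The operator `Ĥ f = −X · ∑_α ∂²f/∂w_α∂v_α` on functions on `ℂⁿ × ℂⁿ`. -/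
def Hop (n : ℕ) (f : (Fin n → ℂ) × (Fin n → ℂ) → ℂ)
    (p : (Fin n → ℂ) × (Fin n → ℂ)) : ℂ :=
  -(XvalC n p) * ∑ α : Fin n,
    fderiv ℂ (fun q => fderiv ℂ f q (Pi.single α 1, 0)) p (0, Pi.single α 1)

namespace Stmt0Aux

section General
variable {σ : Type*} [Fintype σ] [DecidableEq σ]

/-- The derivative (as a CLM) of evaluation of a multivariate polynomial. -/
def evalDeriv (Q : MvPolynomial σ ℂ) (x : σ → ℂ) : (σ → ℂ) →L[ℂ] ℂ :=
  ∑ i : σ, (eval x (pderiv i Q)) • (ContinuousLinearMap.proj i :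
    (σ → ℂ) →L[ℂ] ℂ)

lemma evalDeriv_apply (Q : MvPolynomial σ ℂ) (x d : σ → ℂ) :
    evalDeriv Q x d = ∑ i : σ, eval x (pderiv i Q) * d i := by
  simp [evalDeriv]

lemma hasFDerivAt_eval (Q : MvPolynomial σ ℂ) (x : σ → ℂ) :
    HasFDerivAt (fun y => eval y Q) (evalDeriv Q x) x := by
  induction Q using MvPolynomial.induction_on with
  | C a =>
      have : evalDeriv (C a : MvPolynomial σ ℂ) x = 0 := by
        refine Finset.sum_eq_zero fun i _ => ?_
        rw [pderiv_C, map_zero]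
        exact zero_smul ℂ (ContinuousLinearMap.proj i : (σ → ℂ) →L[ℂ] ℂ)
      rw [this]
      simpa using hasFDerivAt_const (a : ℂ) x
  | add p q hp hq =>
      have : evalDeriv (p + q) x = evalDeriv p x + evalDeriv q x := by
        ext d
        simp [evalDeriv_apply, mul_add, add_mul, Finset.sum_add_distrib]
      rw [this]
      simp only [map_add]
      exact hp.add hq
  | mul_X p i hp =>
      have h1 : HasFDerivAt (fun y : σ → ℂ => y i)
          (ContinuousLinearMap.proj i : (σ → ℂ) →L[ℂ] ℂ) x :=
        (ContinuousLinearMap.proj i : (σ → ℂ) →L[ℂ] ℂ).hasFDerivAt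
      have h2 := hp.mul h1
      have heq : evalDeriv (p * X i) x
          = eval x p • (ContinuousLinearMap.proj i : (σ → ℂ) →L[ℂ] ℂ)
            + x i • evalDeriv p x := by
        ext d
        have key : ∀ j, eval x (pderiv j (p * X i)) * d j
            = x i * (eval x (pderiv j p) * d j)
              + (if j = i then eval x p * d j else 0) := by
          intro j
          rcases eq_or_ne j i with h | h
          · subst h; simp [pderiv_mul]; ring
          · simp [pderiv_mul, h]; ring
        rw [ContinuousLinearMap.add_apply, ContinuousLinearMap.smul_apply,
          ContinuousLinearMap.smul_apply, evalDeriv_apply, evalDeriv_apply,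
          Finset.sum_congr rfl (fun j _ => key j), Finset.sum_add_distrib,
          Finset.sum_ite_eq' Finset.univ i]
        simp [Finset.mul_sum]
        ring
      rw [heq]
      have hfe : (fun y : σ → ℂ => eval y (p * X i)) = fun y => eval y p * y i := by
        funext y; simp
      rw [hfe]
      exact h2

lemma X_mul_pderiv_monomial (i : σ) (d : σ →₀ ℕ) (a : ℂ) :
    X i * pderiv i (monomial d a) = monomial d (a * d i) := by
  rw [pderiv_monomial]
  rcases Nat.eq_zero_or_pos (d i) with h | h
  · simp [h]
  · rw [X, monomial_mul, one_mul]
    congr 1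
    rw [add_comm, tsub_add_cancel_of_le (Finsupp.single_le_iff.2 h)]

lemma euler (w : σ → ℕ) {L : ℕ} {P : MvPolynomial σ ℂ}
    (h : P.IsWeightedHomogeneous w L) :
    ∑ i : σ, C (w i : ℂ) * (X i * pderiv i P) = C (L : ℂ) * P := by
  have expand : ∀ i : σ, X i * pderiv i P
      = ∑ d ∈ P.support, monomial d (coeff d P * d i) := by
    intro i
    conv_lhs => rw [P.as_sum]
    rw [map_sum, Finset.mul_sum]
    exact Finset.sum_congr rfl fun d _ => X_mul_pderiv_monomial i d (coeff d P)
  calc ∑ i : σ, C (w i : ℂ) * (X i * pderiv i P)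
      = ∑ d ∈ P.support, ∑ i : σ, C (w i : ℂ) * monomial d (coeff d P * d i) := by
        rw [Finset.sum_comm]
        exact Finset.sum_congr rfl fun i _ => by rw [expand i, Finset.mul_sum]
    _ = ∑ d ∈ P.support, C (L : ℂ) * monomial d (coeff d P) := by
        refine Finset.sum_congr rfl fun d hd => ?_
        have hwd : Finsupp.weight w d = L := h (mem_support_iff.1 hd)
        have key : monomial d (coeff d P * ∑ i : σ, ((d i : ℂ) * (w i : ℂ) : ℂ))
            = ∑ i : σ, C (w i : ℂ) * monomial d (coeff d P * d i) := by
          rw [Finset.mul_sum, map_sum]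
          refine Finset.sum_congr rfl fun i _ => ?_
          rw [C_mul_monomial]
          ring_nf
        rw [← key, C_mul_monomial]
        congr 1
        have hsum : ((L : ℕ) : ℂ) = ∑ i : σ, (d i : ℂ) * (w i : ℂ) := by
          rw [← hwd]
          rw [Finsupp.weight_apply, Finsupp.sum_fintype _ _ (fun i => by simp)]
          push_cast
          simp [mul_comm]
        rw [← hsum]
        ring
    _ = C (L : ℂ) * P := by rw [← Finset.mul_sum, ← P.as_sum]

lemma pderiv_comm (i j : σ) (P : MvPolynomial σ ℂ) :
    pderiv i (pderiv j P) = pderiv j (pderiv i P) := by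
  induction P using MvPolynomial.induction_on' with
  | monomial d a =>
      rcases eq_or_ne i j with h | h
      · subst h; rfl
      · simp only [pderiv_monomial]
        rw [Finsupp.tsub_apply, Finsupp.tsub_apply, Finsupp.single_eq_of_ne h,
          Finsupp.single_eq_of_ne (Ne.symm h)]
        congr 1
        · rw [tsub_tsub, tsub_tsub, add_comm]
        · rw [Nat.sub_zero, Nat.sub_zero]; ring
  | add p q hp hq => simp [map_add, hp, hq]

end General

section Dim
variable {n : ℕ}

/-- The continuous linear embedding `(w,v) ↦ Sum.elim w v`. -/
def piWV (n : ℕ) : ((Fin n → ℂ) × (Fin n → ℂ)) →L[ℂ] (Fin n ⊕ Fin n → ℂ) :=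
  ContinuousLinearMap.pi (Sum.elim
    (fun a => (ContinuousLinearMap.proj a).comp
      (ContinuousLinearMap.fst ℂ (Fin n → ℂ) (Fin n → ℂ)))
    (fun a => (ContinuousLinearMap.proj a).comp
      (ContinuousLinearMap.snd ℂ (Fin n → ℂ) (Fin n → ℂ))))

lemma piWV_apply (p : (Fin n → ℂ) × (Fin n → ℂ)) :
    piWV n p = Sum.elim p.1 p.2 := by
  funext i; cases i <;> rfl

/-- Derivative CLM of `evalWV`. -/
def Dq (n : ℕ) (Q : MvPolynomial (Fin n ⊕ Fin n) ℂ)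
    (p : (Fin n → ℂ) × (Fin n → ℂ)) : ((Fin n → ℂ) × (Fin n → ℂ)) →L[ℂ] ℂ :=
  (evalDeriv Q (Sum.elim p.1 p.2)).comp (piWV n)

lemma hasFDerivAt_evalWV (Q : MvPolynomial (Fin n ⊕ Fin n) ℂ)
    (p : (Fin n → ℂ) × (Fin n → ℂ)) :
    HasFDerivAt (evalWV n Q) (Dq n Q p) p := by
  have h := (hasFDerivAt_eval Q (piWV n p)).comp p (piWV n).hasFDerivAt
  have h1 : (fun y => eval y Q) ∘ (piWV n) = evalWV n Q := by
    funext q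
    simp [evalWV, Function.comp, piWV_apply]
  have h2 : piWV n p = Sum.elim p.1 p.2 := piWV_apply p
  rw [h1, h2] at h
  exact h

lemma Dq_apply_w (Q : MvPolynomial (Fin n ⊕ Fin n) ℂ)
    (p : (Fin n → ℂ) × (Fin n → ℂ)) (α : Fin n) :
    Dq n Q p (Pi.single α 1, 0) = evalWV n (pderiv (Sum.inl α) Q) p := by
  rw [Dq, ContinuousLinearMap.comp_apply, piWV_apply, evalDeriv_apply]
  rw [Fintype.sum_sum_type]
  simp only [Sum.elim_inl, Sum.elim_inr, Pi.zero_apply, mul_zero,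
    Finset.sum_const_zero, add_zero, Pi.single_apply, mul_ite, mul_one, mul_zero]
  rw [Finset.sum_ite_eq' Finset.univ α]
  simp [evalWV]

lemma Dq_apply_v (Q : MvPolynomial (Fin n ⊕ Fin n) ℂ)
    (p : (Fin n → ℂ) × (Fin n → ℂ)) (α : Fin n) :
    Dq n Q p (0, Pi.single α 1) = evalWV n (pderiv (Sum.inr α) Q) p := by
  rw [Dq, ContinuousLinearMap.comp_apply, piWV_apply, evalDeriv_apply]
  rw [Fintype.sum_sum_type]
  simp only [Sum.elim_inl, Sum.elim_inr, Pi.zero_apply, mul_zero,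
    Finset.sum_const_zero, zero_add, Pi.single_apply, mul_ite, mul_one, mul_zero]
  rw [Finset.sum_ite_eq' Finset.univ α]
  simp [evalWV]

/-- The polynomial `X = ∑ w_α v_α`. -/
def Xp (n : ℕ) : MvPolynomial (Fin n ⊕ Fin n) ℂ :=
  ∑ α : Fin n, X (Sum.inl α) * X (Sum.inr α)

lemma XvalC_eq (p : (Fin n → ℂ) × (Fin n → ℂ)) :
    XvalC n p = evalWV n (Xp n) p := by
  simp [XvalC, evalWV, Xp]

lemma pderiv_inl_Xp (α : Fin n) :
    pderiv (Sum.inl α) (Xp n) = X (Sum.inr α) := by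
  rw [Xp, map_sum]
  rw [Finset.sum_eq_single α]
  · simp [pderiv_mul]
  · intro b _ hb
    have h1 : (Sum.inl b : Fin n ⊕ Fin n) ≠ Sum.inl α := by simp [hb]
    have h2 : (Sum.inr b : Fin n ⊕ Fin n) ≠ Sum.inl α := by simp
    simp [pderiv_mul, pderiv_X_of_ne h1, pderiv_X_of_ne h2]
  · simp

lemma pderiv_inr_Xp (α : Fin n) :
    pderiv (Sum.inr α) (Xp n) = X (Sum.inl α) := by
  rw [Xp, map_sum]
  rw [Finset.sum_eq_single α]
  · simp [pderiv_mul]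
  · intro b _ hb
    have h1 : (Sum.inl b : Fin n ⊕ Fin n) ≠ Sum.inr α := by simp
    have h2 : (Sum.inr b : Fin n ⊕ Fin n) ≠ Sum.inr α := by simp [hb]
    simp [pderiv_mul, pderiv_X_of_ne h1, pderiv_X_of_ne h2]
  · simp

lemma hasFDerivAt_XvalC (p : (Fin n → ℂ) × (Fin n → ℂ)) :
    HasFDerivAt (XvalC n) (Dq n (Xp n) p) p := by
  have h := hasFDerivAt_evalWV (Xp n) p
  have : evalWV n (Xp n) = XvalC n := by funext q; rw [XvalC_eq]
  rwa [this] at h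

lemma Dq_Xp_apply_w (p : (Fin n → ℂ) × (Fin n → ℂ)) (α : Fin n) :
    Dq n (Xp n) p (Pi.single α 1, 0) = p.2 α := by
  rw [Dq_apply_w, pderiv_inl_Xp]
  simp [evalWV]

lemma Dq_Xp_apply_v (p : (Fin n → ℂ) × (Fin n → ℂ)) (α : Fin n) :
    Dq n (Xp n) p (0, Pi.single α 1) = p.1 α := by
  rw [Dq_apply_v, pderiv_inr_Xp]
  simp [evalWV]

/-- `Φ_Q^m (q) = X(q)^m · Q(q)`. -/
def Phi (n : ℕ) (Q : MvPolynomial (Fin n ⊕ Fin n) ℂ) (m : ℤ)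
    (q : (Fin n → ℂ) × (Fin n → ℂ)) : ℂ :=
  XvalC n q ^ m * evalWV n Q q

def DPhi (n : ℕ) (Q : MvPolynomial (Fin n ⊕ Fin n) ℂ) (m : ℤ)
    (p : (Fin n → ℂ) × (Fin n → ℂ)) : ((Fin n → ℂ) × (Fin n → ℂ)) →L[ℂ] ℂ :=
  (XvalC n p ^ m) • Dq n Q p
    + (evalWV n Q p * ((m : ℂ) * XvalC n p ^ (m - 1))) • Dq n (Xp n) p

lemma hasFDerivAt_Phi (Q : MvPolynomial (Fin n ⊕ Fin n) ℂ) (m : ℤ)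
    {p : (Fin n → ℂ) × (Fin n → ℂ)} (hp : XvalC n p ≠ 0) :
    HasFDerivAt (Phi n Q m) (DPhi n Q m p) p := by
  have hz : HasDerivAt (fun x : ℂ => x ^ m) ((m : ℂ) * (XvalC n p) ^ (m - 1)) (XvalC n p) :=
    hasDerivAt_zpow m _ (Or.inl hp)
  have h1 : HasFDerivAt (fun q => XvalC n q ^ m)
      (((m : ℂ) * XvalC n p ^ (m - 1)) • Dq n (Xp n) p) p :=
    hz.comp_hasFDerivAt p (hasFDerivAt_XvalC p)
  have h2 := h1.mul (hasFDerivAt_evalWV Q p)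
  have : (XvalC n p ^ m) • Dq n Q p
      + evalWV n Q p • (((m : ℂ) * XvalC n p ^ (m - 1)) • Dq n (Xp n) p)
      = DPhi n Q m p := by
    rw [DPhi, smul_smul]
  rw [this] at h2
  exact h2

lemma DPhi_apply_w (Q : MvPolynomial (Fin n ⊕ Fin n) ℂ) (m : ℤ)
    (p : (Fin n → ℂ) × (Fin n → ℂ)) (α : Fin n) :
    DPhi n Q m p (Pi.single α 1, 0)
      = XvalC n p ^ m * evalWV n (pderiv (Sum.inl α) Q) p
        + evalWV n Q p * ((m : ℂ) * XvalC n p ^ (m - 1)) * p.2 α := by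
  rw [DPhi, ContinuousLinearMap.add_apply, ContinuousLinearMap.smul_apply,
    ContinuousLinearMap.smul_apply, Dq_apply_w, Dq_Xp_apply_w]
  simp [smul_eq_mul]

lemma DPhi_apply_v (Q : MvPolynomial (Fin n ⊕ Fin n) ℂ) (m : ℤ)
    (p : (Fin n → ℂ) × (Fin n → ℂ)) (α : Fin n) :
    DPhi n Q m p (0, Pi.single α 1)
      = XvalC n p ^ m * evalWV n (pderiv (Sum.inr α) Q) p
        + evalWV n Q p * ((m : ℂ) * XvalC n p ^ (m - 1)) * p.1 α := by
  rw [DPhi, ContinuousLinearMap.add_apply, ContinuousLinearMap.smul_apply,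
    ContinuousLinearMap.smul_apply, Dq_apply_v, Dq_Xp_apply_v]
  simp [smul_eq_mul]

lemma evalWV_X_inr_mul (Q : MvPolynomial (Fin n ⊕ Fin n) ℂ)
    (q : (Fin n → ℂ) × (Fin n → ℂ)) (α : Fin n) :
    evalWV n (X (Sum.inr α) * Q) q = q.2 α * evalWV n Q q := by
  simp [evalWV]

lemma isOpen_U : IsOpen {q : (Fin n → ℂ) × (Fin n → ℂ) | XvalC n q ≠ 0} := by
  have hc : Continuous (XvalC n) := by
    apply continuous_finset_sum
    intro α _
    exact ((continuous_apply α).comp continuous_fst).mul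
      ((continuous_apply α).comp continuous_snd)
  exact isOpen_compl_singleton.preimage hc

end Dim
end Stmt0Aux

namespace Stmt0Aux
variable {n : ℕ}

lemma euler_eval_w {L : ℕ} {P : MvPolynomial (Fin n ⊕ Fin n) ℂ}
    (hw : P.IsWeightedHomogeneous (wWt n) L) (p : (Fin n → ℂ) × (Fin n → ℂ)) :
    ∑ α : Fin n, p.1 α * evalWV n (pderiv (Sum.inl α) P) p
      = (L : ℂ) * evalWV n P p := by
  have h := congrArg (eval (Sum.elim p.1 p.2)) (euler (wWt n) hw)
  rw [map_sum, Fintype.sum_sum_type] at h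
  simp only [eval_mul, eval_C, eval_X, wWt, Sum.elim_inl, Sum.elim_inr, Nat.cast_one,
    Nat.cast_zero, one_mul, zero_mul, add_zero, Finset.sum_const_zero] at h
  simpa [evalWV] using h

lemma euler_eval_v {L : ℕ} {P : MvPolynomial (Fin n ⊕ Fin n) ℂ}
    (hv : P.IsWeightedHomogeneous (vWt n) L) (p : (Fin n → ℂ) × (Fin n → ℂ)) :
    ∑ α : Fin n, p.2 α * evalWV n (pderiv (Sum.inr α) P) p
      = (L : ℂ) * evalWV n P p := by
  have h := congrArg (eval (Sum.elim p.1 p.2)) (euler (vWt n) hv)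
  rw [map_sum, Fintype.sum_sum_type] at h
  simp only [eval_mul, eval_C, eval_X, vWt, Sum.elim_inl, Sum.elim_inr, Nat.cast_one,
    Nat.cast_zero, one_mul, zero_mul, add_zero, zero_add, Finset.sum_const_zero] at h
  simpa [evalWV] using h

lemma Hop_Phi {L : ℕ} {P : MvPolynomial (Fin n ⊕ Fin n) ℂ}
    (hw : P.IsWeightedHomogeneous (wWt n) L)
    (hv : P.IsWeightedHomogeneous (vWt n) L)
    {p : (Fin n → ℂ) × (Fin n → ℂ)} (hp : XvalC n p ≠ 0) :
    Hop n (Phi n P (-(L : ℤ))) p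
      = -(XvalC n p ^ (-(L : ℤ) + 1) * evalWV n (polyLap n P) p)
        + (L : ℂ) * ((L : ℂ) + (n : ℂ) - 1)
          * (XvalC n p ^ (-(L : ℤ)) * evalWV n P p) := by
  set m : ℤ := -(L : ℤ) with hm
  have hmc : (m : ℂ) = -(L : ℂ) := by rw [hm]; push_cast; ring
  have hU : ∀ q ∈ {q : (Fin n → ℂ) × (Fin n → ℂ) | XvalC n q ≠ 0},
      fderiv ℂ (Phi n P m) q = DPhi n P m q :=
    fun q hq => (hasFDerivAt_Phi P m hq).fderiv
  have hmem : {q : (Fin n → ℂ) × (Fin n → ℂ) | XvalC n q ≠ 0} ∈ nhds p :=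
    isOpen_U.mem_nhds hp
  have hinner : ∀ α : Fin n,
      (fun q => fderiv ℂ (Phi n P m) q (Pi.single α 1, 0)) =ᶠ[nhds p]
      (fun q => Phi n (pderiv (Sum.inl α) P) m q
        + (m : ℂ) * Phi n (X (Sum.inr α) * P) (m - 1) q) := by
    intro α
    filter_upwards [hmem] with q hq
    rw [hU q hq, DPhi_apply_w, Phi, Phi, evalWV_X_inr_mul]
    ring
  have houter : ∀ α : Fin n,
      fderiv ℂ (fun q => fderiv ℂ (Phi n P m) q (Pi.single α 1, 0)) p (0, Pi.single α 1)
      = (DPhi n (pderiv (Sum.inl α) P) m p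
          + (m : ℂ) • DPhi n (X (Sum.inr α) * P) (m - 1) p) (0, Pi.single α 1) := by
    intro α
    rw [(hinner α).fderiv_eq]
    have hG : HasFDerivAt (fun q => Phi n (pderiv (Sum.inl α) P) m q
        + (m : ℂ) * Phi n (X (Sum.inr α) * P) (m - 1) q)
        (DPhi n (pderiv (Sum.inl α) P) m p
          + (m : ℂ) • DPhi n (X (Sum.inr α) * P) (m - 1) p) p :=
      (hasFDerivAt_Phi _ m hp).add ((hasFDerivAt_Phi _ (m - 1) hp).const_mul (m : ℂ))
    rw [hG.fderiv]
  have hterm : ∀ α : Fin n,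
      fderiv ℂ (fun q => fderiv ℂ (Phi n P m) q (Pi.single α 1, 0)) p (0, Pi.single α 1)
      = XvalC n p ^ m * evalWV n (pderiv (Sum.inr α) (pderiv (Sum.inl α) P)) p
        + ((m : ℂ) * XvalC n p ^ (m - 1)) * (p.1 α * evalWV n (pderiv (Sum.inl α) P) p)
        + ((m : ℂ) * XvalC n p ^ (m - 1)) * evalWV n P p
        + ((m : ℂ) * XvalC n p ^ (m - 1)) * (p.2 α * evalWV n (pderiv (Sum.inr α) P) p)
        + ((m : ℂ) * ((m : ℂ) - 1) * XvalC n p ^ (m - 1 - 1) * evalWV n P p)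
            * (p.1 α * p.2 α) := by
    intro α
    rw [houter α, ContinuousLinearMap.add_apply, ContinuousLinearMap.smul_apply,
      DPhi_apply_v, DPhi_apply_v]
    have hpd : pderiv (Sum.inr α) (X (Sum.inr α) * P)
        = P + X (Sum.inr α) * pderiv (Sum.inr α) P := by
      rw [pderiv_mul, pderiv_X_self]; ring
    rw [hpd]
    have hE : evalWV n (P + X (Sum.inr α) * pderiv (Sum.inr α) P) p
        = evalWV n P p + p.2 α * evalWV n (pderiv (Sum.inr α) P) p := by
      simp [evalWV]
    rw [hE, evalWV_X_inr_mul]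
    simp only [smul_eq_mul]
    push_cast
    ring
  have hsum : ∑ α : Fin n,
      fderiv ℂ (fun q => fderiv ℂ (Phi n P m) q (Pi.single α 1, 0)) p (0, Pi.single α 1)
      = XvalC n p ^ m * evalWV n (polyLap n P) p
        + ((m : ℂ) * XvalC n p ^ (m - 1)) * ((L : ℂ) * evalWV n P p)
        + (n : ℂ) * (((m : ℂ) * XvalC n p ^ (m - 1)) * evalWV n P p)
        + ((m : ℂ) * XvalC n p ^ (m - 1)) * ((L : ℂ) * evalWV n P p)
        + ((m : ℂ) * ((m : ℂ) - 1) * XvalC n p ^ (m - 1 - 1) * evalWV n P p)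
            * XvalC n p := by
    rw [Finset.sum_congr rfl fun α _ => hterm α]
    simp only [Finset.sum_add_distrib, ← Finset.mul_sum, Finset.sum_const,
      Finset.card_univ, Fintype.card_fin, nsmul_eq_mul]
    rw [euler_eval_w hw p, euler_eval_v hv p]
    have hlap : ∑ α : Fin n, evalWV n (pderiv (Sum.inr α) (pderiv (Sum.inl α) P)) p
        = evalWV n (polyLap n P) p := by
      rw [polyLap]
      simp only [evalWV, map_sum]
      exact Finset.sum_congr rfl fun α _ => by rw [pderiv_comm]
    rw [hlap]
    have hx : ∑ α : Fin n, p.1 α * p.2 α = XvalC n p := rfl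
    rw [hx]
    ring
  rw [Hop, hsum]
  rw [hmc]
  have h1 : XvalC n p ^ (m - 1) = XvalC n p ^ m * (XvalC n p)⁻¹ := zpow_sub_one₀ hp m
  have h2 : XvalC n p ^ (m - 1 - 1) = XvalC n p ^ (m - 1) * (XvalC n p)⁻¹ :=
    zpow_sub_one₀ hp (m - 1)
  have h3 : XvalC n p ^ (m + 1) = XvalC n p ^ m * XvalC n p := zpow_add_one₀ hp m
  rw [h2, h1, h3]
  field_simp
  ring

end Stmt0Aux


open Stmt0Aux

/-- Theorem 1 of the paper: for `P` bihomogeneous of bidegree `(L,L)`, the function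
`Ψ = X^{-L}·P` is an eigenfunction of `Ĥ` with eigenvalue `L(L+n−1)` on `{X ≠ 0}`
if and only if `ΔP = 0`. -/
theorem stmt0 (n L : ℕ) (hn : 2 ≤ n) (P : MvPolynomial (Fin n ⊕ Fin n) ℂ)
    (hw : P.IsWeightedHomogeneous (wWt n) L)
    (hv : P.IsWeightedHomogeneous (vWt n) L) :
    polyLap n P = 0 ↔
      ∀ p : (Fin n → ℂ) × (Fin n → ℂ), XvalC n p ≠ 0 →
        Hop n (fun q => (XvalC n q) ^ (-(L : ℤ)) * evalWV n P q) p
          = ((L * (L + n - 1) : ℕ) : ℂ) *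
            ((XvalC n p) ^ (-(L : ℤ)) * evalWV n P p) := by
  have hfun : (fun q => (XvalC n q) ^ (-(L : ℤ)) * evalWV n P q) = Phi n P (-(L : ℤ)) := rfl
  have hK : ((L * (L + n - 1) : ℕ) : ℂ) = (L : ℂ) * ((L : ℂ) + (n : ℂ) - 1) := by
    have h1 : (L + n - 1 : ℕ) = L + (n - 1) := by omega
    rw [Nat.cast_mul, h1]
    push_cast [Nat.cast_sub (by omega : 1 ≤ n)]
    ring
  constructor
  · intro h0 p hp
    rw [hfun, Hop_Phi hw hv hp, h0, hK]
    simp [evalWV]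
  · intro hH
    have key : ∀ x0 : (Fin n ⊕ Fin n) → ℂ, eval x0 (Xp n) ≠ 0 →
        eval x0 (polyLap n P) = 0 := by
      intro x0 hx0
      set p : (Fin n → ℂ) × (Fin n → ℂ) :=
        (fun a => x0 (Sum.inl a), fun a => x0 (Sum.inr a)) with hpdef
      have helim : Sum.elim p.1 p.2 = x0 := by funext i; cases i <;> rfl
      have hxp : XvalC n p = eval x0 (Xp n) := by rw [XvalC_eq, evalWV, helim]
      have hp : XvalC n p ≠ 0 := by rw [hxp]; exact hx0
      have h1 := hH p hp
      rw [hfun, Hop_Phi hw hv hp, hK] at h1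
      have h2 : XvalC n p ^ (-(L : ℤ) + 1) * evalWV n (polyLap n P) p = 0 := by
        linear_combination -h1
      have h3 : evalWV n (polyLap n P) p = 0 :=
        (mul_eq_zero.mp h2).resolve_left (zpow_ne_zero _ hp)
      rw [evalWV, helim] at h3
      exact h3
    have hmul : Xp n * polyLap n P = 0 := by
      apply MvPolynomial.funext
      intro x0
      rw [eval_mul, map_zero]
      rcases eq_or_ne (eval x0 (Xp n)) 0 with h | h
      · rw [h, zero_mul]
      · rw [key x0 h, mul_zero]
    have hXp : (Xp n : MvPolynomial (Fin n ⊕ Fin n) ℂ) ≠ 0 := by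
      intro hc
      have h := congrArg (eval (Sum.elim (fun _ : Fin n => (1 : ℂ)) (fun _ => 1))) hc
      rw [map_zero, Xp, map_sum] at h
      simp only [eval_mul, eval_X, Sum.elim_inl, Sum.elim_inr, mul_one,
        Finset.sum_const, Finset.card_univ, Fintype.card_fin, nsmul_eq_mul] at h
      simp at h
      omega
    rcases mul_eq_zero.mp hmul with h | h
    · exact absurd h hXp
    · exact h
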